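/- arXiv:1201.6432 — 2 statements merged into one kernel-verified Lean document; each statement's English description precedes it below -/
import Mathlib

section
/- For all positive real numbers a, b with a ≠ b, the strict inequality T(a,b) < C̄(a,b) holds. -/
open Real

/-- The Seiffert mean of two positive reals. -/
noncomputable def seiffertT (a b : ℝ) : ℝ := (a - b) / (2 * Real.arctan ((a - b) / (a + b)))

/-- The centroidal mean of two positive reals. -/
noncomputable def centroidalMean (a b : ℝ) : ℝ := 2 * (a ^ 2 + a * b + b ^ 2) / (3 * (a + b))

lemma arctan_key {x : ℝ} (hx : 0 < x) : 3 * x / (3 + x ^ 2) < Real.arctan x := by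
  have h : StrictMonoOn (fun y : ℝ => Real.arctan y - 3 * y / (3 + y ^ 2)) (Set.Ici 0) := by
    apply strictMonoOn_of_deriv_pos (convex_Ici 0)
    · apply Continuous.continuousOn
      apply Continuous.sub Real.continuous_arctan
      apply Continuous.div (by continuity) (by continuity)
      intro y; positivity
    · intro y hy
      rw [interior_Ici] at hy
      have hy' : (0 : ℝ) < y := hy
      have h3 : (3 + y ^ 2) ≠ 0 := by positivity
      have hd : HasDerivAt (fun y : ℝ => Real.arctan y - 3 * y / (3 + y ^ 2))
          (4 * y ^ 4 / ((1 + y ^ 2) * (3 + y ^ 2) ^ 2)) y := by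
        have h1 : HasDerivAt (fun y : ℝ => 3 * y) 3 y := by
          simpa using (hasDerivAt_id y).const_mul 3
        have h2 : HasDerivAt (fun y : ℝ => 3 + y ^ 2) (2 * y) y := by
          simpa using (hasDerivAt_pow 2 y).const_add 3
        have := (Real.hasDerivAt_arctan y).sub (h1.div h2 h3)
        refine this.congr_deriv ?_
        have h4 : (1 + y ^ 2) ≠ 0 := by positivity
        field_simp
        ring
      rw [hd.deriv]
      have h5 : 0 < y ^ 4 := pow_pos hy' 4
      apply div_pos (by linarith) (by positivity)
  have h0 : (0 : ℝ) ∈ Set.Ici (0 : ℝ) := Set.self_mem_Ici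
  have hx' : x ∈ Set.Ici (0 : ℝ) := le_of_lt hx
  have := h h0 hx' hx
  simp only [Real.arctan_zero, mul_zero, zero_div, sub_zero, zero_sub] at this
  linarith

lemma seiffert_symm (a b : ℝ) : seiffertT a b = seiffertT b a := by
  unfold seiffertT
  have h1 : (b - a) / (b + a) = -((a - b) / (a + b)) := by
    rw [add_comm b a, ← neg_div, neg_sub]
  rw [h1, Real.arctan_neg, mul_neg, div_neg, ← neg_div, neg_sub]

lemma centroidal_symm (a b : ℝ) : centroidalMean a b = centroidalMean b a := by
  unfold centroidalMean; ring_nf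

lemma main_lt (a b : ℝ) (ha : 0 < a) (hb : 0 < b) (h : b < a) :
    seiffertT a b < centroidalMean a b := by
  have hs : 0 < a + b := by linarith
  have hd : 0 < a - b := by linarith
  set x := (a - b) / (a + b) with hxdef
  have hx : 0 < x := div_pos hd hs
  have hkey := arctan_key hx
  have hden : 0 < 3 * x / (3 + x ^ 2) := div_pos (by linarith) (by positivity)
  have h1 : seiffertT a b < (a - b) / (2 * (3 * x / (3 + x ^ 2))) := by
    unfold seiffertT
    rw [← hxdef]
    exact div_lt_div_of_pos_left hd (by linarith) (by linarith)
  have h2 : (a - b) / (2 * (3 * x / (3 + x ^ 2))) = centroidalMean a b := by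
    unfold centroidalMean
    rw [hxdef]
    have h3 : (3 + ((a - b) / (a + b)) ^ 2) ≠ 0 := by positivity
    field_simp
    ring
  linarith

theorem stmt_1 (a b : ℝ) (ha : 0 < a) (hb : 0 < b) (hab : a ≠ b) :
    seiffertT a b < centroidalMean a b := by
  rcases hab.lt_or_gt with h | h
  · rw [seiffert_symm, centroidal_symm]
    exact main_lt b a hb ha h
  · exact main_lt a b ha hb h
end

section
/- For all positive real numbers a, b with a ≠ b, the strict inequality T(a,b) < (1/3)·C(a,b) + (2/3)·A(a,b) holds. -/
open Real


/-- The arithmetic mean of two positive reals. -/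
noncomputable def arithMean (a b : ℝ) : ℝ := (a + b) / 2

/-- The contra-harmonic mean of two positive reals. -/
noncomputable def contraharmonicMean (a b : ℝ) : ℝ := (a ^ 2 + b ^ 2) / (a + b)


lemma key_arctan (t : ℝ) (ht : 0 < t) : 3 * t / (3 + t ^ 2) < Real.arctan t := by
  have h : StrictMonoOn (fun x : ℝ => Real.arctan x - 3 * x / (3 + x ^ 2)) (Set.Ici 0) := by
    apply strictMonoOn_of_deriv_pos (convex_Ici 0)
    · apply ContinuousOn.sub Real.continuous_arctan.continuousOn
      apply ContinuousOn.div (by fun_prop) (by fun_prop)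
      intro x _; positivity
    · intro x hx
      rw [interior_Ici] at hx
      have hx0 : (0:ℝ) < x := hx
      have hd : HasDerivAt (fun x : ℝ => Real.arctan x - 3 * x / (3 + x ^ 2))
          (1 / (1 + x ^ 2) - ((3) * (3 + x ^ 2) - 3 * x * (2 * x)) / (3 + x ^ 2) ^ 2) x := by
        apply (Real.hasDerivAt_arctan x).sub
        exact (((hasDerivAt_id x).const_mul 3).div
          (((hasDerivAt_pow 2 x).const_add 3)) (by positivity)).congr_deriv (by simp only [id_eq]; ring)
      rw [hd.deriv]
      rw [div_sub_div _ _ (by positivity) (by positivity)]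
      apply div_pos _ (by positivity)
      nlinarith [sq_nonneg x, pow_pos hx0 4]
  have := h (Set.self_mem_Ici) (Set.mem_Ici.2 ht.le) ht
  simpa using this

lemma key2 (t : ℝ) (ht : t ≠ 0) : t / Real.arctan t < 1 + t ^ 2 / 3 := by
  have main : ∀ s : ℝ, 0 < s → s / Real.arctan s < 1 + s ^ 2 / 3 := by
    intro s hs
    have h1 := key_arctan s hs
    have h2 : 0 < 3 * s / (3 + s ^ 2) := by positivity
    have h3 : s / Real.arctan s < s / (3 * s / (3 + s ^ 2)) :=
      div_lt_div_of_pos_left hs h2 h1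
    calc s / Real.arctan s < s / (3 * s / (3 + s ^ 2)) := h3
      _ = 1 + s ^ 2 / 3 := by field_simp
  rcases lt_or_gt_of_ne ht with h | h
  · have := main (-t) (by linarith)
    rw [Real.arctan_neg, neg_div_neg_eq] at this
    simpa using this
  · exact main t h

theorem stmt_6 (a b : ℝ) (ha : 0 < a) (hb : 0 < b) (hab : a ≠ b) :
    seiffertT a b < (1 / 3) * contraharmonicMean a b + (2 / 3) * arithMean a b := by
  have hs : 0 < a + b := by linarith
  set t := (a - b) / (a + b) with htdef
  have ht : t ≠ 0 := div_ne_zero (sub_ne_zero.2 hab) hs.ne'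
  have hat : Real.arctan t ≠ 0 := fun h => ht (Real.arctan_injective (by simpa using h))
  have hL : seiffertT a b = ((a + b) / 2) * (t / Real.arctan t) := by
    rw [seiffertT, htdef]
    field_simp
  have hR : (1 / 3) * contraharmonicMean a b + (2 / 3) * arithMean a b
      = ((a + b) / 2) * (1 + t ^ 2 / 3) := by
    rw [contraharmonicMean, arithMean, htdef]
    field_simp
    ring
  rw [hL, hR]
  exact mul_lt_mul_of_pos_left (key2 t ht) (by positivity)
end
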